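/- Let σ₀ = 0 < σ₁ < σ₂ < … be reals and {z_k}, {z̄_k}, {z_k*} sequences in a normed space with σ_k z̄_k = σ_{k-1} z̄_{k-1} + (σ_k - σ_{k-1}) z_{k-1}. Suppose ‖z_{k-1} - z_k*‖ ≤ ‖z_{k-1} - z_{k-1}*‖ for all k ≥ 1. Then σ_k ‖z̄_k - z_k*‖ ≤ ∑_{i=1}^k (σ_{i-1} + σ_i) ‖z_{i-1} - z_{i-1}*‖ for all k ≥ 1. -/

import Mathlib

theorem accumulative_bound
    {V : Type*} [NormedAddCommGroup V] [NormedSpace ℝ V]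
    (σ : ℕ → ℝ) (hσ0 : σ 0 = 0) (hmono : StrictMono σ)
    (z zbar zs : ℕ → V)
    (hbar : ∀ k, σ (k+1) • zbar (k+1) = σ k • zbar k + (σ (k+1) - σ k) • z k)
    (hcontr : ∀ k, ‖z k - zs (k+1)‖ ≤ ‖z k - zs k‖) :
    ∀ k, 1 ≤ k →
      σ k * ‖zbar k - zs k‖ ≤ ∑ i ∈ Finset.range k, (σ i + σ (i+1)) * ‖z i - zs i‖ := by
  have hpos : ∀ k, 0 ≤ σ k := by
    intro k
    rw [← hσ0]
    exact hmono.monotone (Nat.zero_le k)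
  have key : ∀ k, σ (k+1) * ‖zbar (k+1) - zs (k+1)‖ ≤
      σ k * ‖zbar k - zs k‖ + (σ k + σ (k+1)) * ‖z k - zs k‖ := by
    intro k
    have hdec : σ (k+1) • (zbar (k+1) - zs (k+1)) =
        σ k • (zbar k - zs k) + (σ (k+1) - σ k) • (z k - zs (k+1))
          + σ k • (zs k - zs (k+1)) := by
      rw [smul_sub, hbar k]
      module
    have h1 : ‖zs k - zs (k+1)‖ ≤ 2 * ‖z k - zs k‖ := by
      calc ‖zs k - zs (k+1)‖ ≤ ‖zs k - z k‖ + ‖z k - zs (k+1)‖ := norm_sub_le_norm_sub_add_norm_sub _ _ _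
        _ ≤ ‖z k - zs k‖ + ‖z k - zs k‖ := by
            rw [norm_sub_rev]
            exact add_le_add le_rfl (hcontr k)
        _ = 2 * ‖z k - zs k‖ := by ring
    have h2 : ‖σ (k+1) • (zbar (k+1) - zs (k+1))‖ ≤
        ‖σ k • (zbar k - zs k)‖ + ‖(σ (k+1) - σ k) • (z k - zs (k+1))‖
          + ‖σ k • (zs k - zs (k+1))‖ := by
      rw [hdec]
      exact norm_add₃_le
    have hlt : σ k ≤ σ (k+1) := (hmono (Nat.lt_succ_self k)).le
    rw [norm_smul, norm_smul, norm_smul, norm_smul] at h2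
    rw [Real.norm_of_nonneg (hpos _), Real.norm_of_nonneg (hpos _),
        Real.norm_of_nonneg (by linarith : (0:ℝ) ≤ σ (k+1) - σ k)] at h2
    have h3 : (σ (k+1) - σ k) * ‖z k - zs (k+1)‖ ≤ (σ (k+1) - σ k) * ‖z k - zs k‖ :=
      mul_le_mul_of_nonneg_left (hcontr k) (by linarith)
    have h4 : σ k * ‖zs k - zs (k+1)‖ ≤ σ k * (2 * ‖z k - zs k‖) :=
      mul_le_mul_of_nonneg_left h1 (hpos k)
    nlinarith [norm_nonneg (z k - zs k)]
  intro k hk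
  induction k with
  | zero => omega
  | succ n ih =>
    rcases Nat.eq_or_lt_of_le hk with h | h
    · -- n = 0
      have hn : n = 0 := by omega
      subst hn
      have hz1 : zbar 1 = z 0 := by
        have h0 := hbar 0
        rw [hσ0] at h0
        simp only [zero_smul, zero_add, sub_zero] at h0
        have hσ1 : σ 1 ≠ 0 := by
          have := hmono (Nat.lt_succ_self 0)
          rw [hσ0] at this; linarith
        exact smul_right_injective V hσ1 h0
      rw [Finset.sum_range_one, hz1, hσ0]
      have := mul_le_mul_of_nonneg_left (hcontr 0) (hpos 1)
      linarith
    · have hn : 1 ≤ n := by omega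
      have := ih hn
      calc σ (n+1) * ‖zbar (n+1) - zs (n+1)‖
          ≤ σ n * ‖zbar n - zs n‖ + (σ n + σ (n+1)) * ‖z n - zs n‖ := key n
        _ ≤ ∑ i ∈ Finset.range n, (σ i + σ (i+1)) * ‖z i - zs i‖
              + (σ n + σ (n+1)) * ‖z n - zs n‖ := by linarith
        _ = ∑ i ∈ Finset.range (n+1), (σ i + σ (i+1)) * ‖z i - zs i‖ := by
            rw [Finset.sum_range_succ]
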